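/- Let H₁, H₂, H₃ be Hilbert spaces and u : H₁ ⊗ H₂ → H₁ unitary, u⁻ : H₂ ⊗ H₃ → H₃ unitary. Define w : H₁ ⊗ H₃ → H₁ ⊗ H₃ by w = (u ⊗ 1_{H₃}) ∘ (1_{H₁} ⊗ (u⁻)*) composed with the associator H₁ ⊗ (H₂ ⊗ H₃) ≅ (H₁ ⊗ H₂) ⊗ H₃. Then w is unitary, and for every a ∈ B(H₁) satisfying w(a ⊗ 1)w* well-defined, one has w (a ⊗ 1_{H₃}) w* = ϑ(a) ⊗ 1_{H₃}, where ϑ(a) := u (a ⊗ 1_{H₂}) u*. -/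

import Mathlib

open ContinuousLinearMap

set_option maxHeartbeats 1000000

/-- If the span of `s` is dense and a continuous linear map sends `s` into a closed
submodule `q`, then it sends everything into `q`. -/
lemma mem_of_dense_span' {E F : Type*}
    [NormedAddCommGroup E] [NormedSpace ℂ E] [NormedAddCommGroup F] [NormedSpace ℂ F]
    {s : Set E} (hs : (Submodule.span ℂ s).topologicalClosure = ⊤)
    (f : E →L[ℂ] F) (q : Submodule ℂ F) (hq : IsClosed (q : Set F))
    (h : ∀ v ∈ s, f v ∈ q) (v : E) : f v ∈ q := by
  have h1 : Submodule.span ℂ s ≤ q.comap (f : E →ₗ[ℂ] F) := by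
    rw [Submodule.span_le]; exact h
  have h2 : IsClosed ((q.comap (f : E →ₗ[ℂ] F) : Submodule ℂ E) : Set E) :=
    hq.preimage f.continuous
  have h3 := Submodule.topologicalClosure_minimal _ h1 h2
  rw [hs] at h3
  exact h3 trivial

lemma ext_of_dense_span' {E F : Type*}
    [NormedAddCommGroup E] [NormedSpace ℂ E] [NormedAddCommGroup F] [NormedSpace ℂ F]
    {s : Set E} (hs : (Submodule.span ℂ s).topologicalClosure = ⊤)
    {f g : E →L[ℂ] F} (h : ∀ v ∈ s, f v = g v) : f = g := by
  ext v
  have hb : IsClosed ((⊥ : Submodule ℂ F) : Set F) := by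
    simp only [Submodule.bot_coe]; exact isClosed_singleton
  have h0 := mem_of_dense_span' hs (f - g) ⊥ hb
    (fun v hv => by simp [Submodule.mem_bot, h v hv]) v
  rw [Submodule.mem_bot, sub_apply, sub_eq_zero] at h0
  exact h0

/-- Let `u : H₁ ⊗ H₂ → H₁` and `u⁻ : H₂ ⊗ H₃ → H₃` be unitaries and let
`w : H₁ ⊗ H₃ → H₁ ⊗ H₃` be `(u ⊗ 1)(1 ⊗ (u⁻)*)` composed with the associator,
i.e. `w (x ⊗ u⁻(y ⊗ z)) = u(x ⊗ y) ⊗ z`.  Then `w` is unitary and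
`w (a ⊗ 1) w* = ϑ(a) ⊗ 1` where `ϑ(a) = u (a ⊗ 1) u*`.  Tensor products are
encoded by Hilbert spaces `H₁₂, H₂₃, H₁₃` with maps `t12, t23, t13` multiplying
inner products and with dense span, and the amplifications `ampl2 a = a ⊗ 1_{H₂}`
(on `H₁₂`), `ampl3 a = a ⊗ 1_{H₃}` (on `H₁₃`) are characterized on elementary
tensors. -/
theorem rebracketting_unitary_implements_theta
    {H₁ H₂ H₃ H₁₂ H₂₃ H₁₃ : Type*}
    [NormedAddCommGroup H₁] [InnerProductSpace ℂ H₁] [CompleteSpace H₁]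
    [NormedAddCommGroup H₂] [InnerProductSpace ℂ H₂] [CompleteSpace H₂]
    [NormedAddCommGroup H₃] [InnerProductSpace ℂ H₃] [CompleteSpace H₃]
    [NormedAddCommGroup H₁₂] [InnerProductSpace ℂ H₁₂] [CompleteSpace H₁₂]
    [NormedAddCommGroup H₂₃] [InnerProductSpace ℂ H₂₃] [CompleteSpace H₂₃]
    [NormedAddCommGroup H₁₃] [InnerProductSpace ℂ H₁₃] [CompleteSpace H₁₃]
    (t12 : H₁ →L[ℂ] H₂ →L[ℂ] H₁₂) (t23 : H₂ →L[ℂ] H₃ →L[ℂ] H₂₃)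
    (t13 : H₁ →L[ℂ] H₃ →L[ℂ] H₁₃)
    (h12 : ∀ x x' y y', inner ℂ (t12 x y) (t12 x' y') = (inner ℂ x x' : ℂ) * (inner ℂ y y' : ℂ))
    (h23 : ∀ y y' z z', inner ℂ (t23 y z) (t23 y' z') = (inner ℂ y y' : ℂ) * (inner ℂ z z' : ℂ))
    (h13 : ∀ x x' z z', inner ℂ (t13 x z) (t13 x' z') = (inner ℂ x x' : ℂ) * (inner ℂ z z' : ℂ))
    (h12d : (Submodule.span ℂ {v : H₁₂ | ∃ x y, v = t12 x y}).topologicalClosure = ⊤)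
    (h23d : (Submodule.span ℂ {v : H₂₃ | ∃ y z, v = t23 y z}).topologicalClosure = ⊤)
    (h13d : (Submodule.span ℂ {v : H₁₃ | ∃ x z, v = t13 x z}).topologicalClosure = ⊤)
    (ampl2 : (H₁ →L[ℂ] H₁) → (H₁₂ →L[ℂ] H₁₂))
    (h_ampl2 : ∀ a x y, ampl2 a (t12 x y) = t12 (a x) y)
    (ampl3 : (H₁ →L[ℂ] H₁) → (H₁₃ →L[ℂ] H₁₃))
    (h_ampl3 : ∀ a x z, ampl3 a (t13 x z) = t13 (a x) z)
    (u : H₁₂ →L[ℂ] H₁) (hu₁ : u ∘L adjoint u = 1) (hu₂ : adjoint u ∘L u = 1)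
    (um : H₂₃ →L[ℂ] H₃) (hum₁ : um ∘L adjoint um = 1) (hum₂ : adjoint um ∘L um = 1)
    (w : H₁₃ →L[ℂ] H₁₃)
    (h_w : ∀ (x : H₁) (y : H₂) (z : H₃), w (t13 x (um (t23 y z))) = t13 (u (t12 x y)) z) :
    (w ∘L adjoint w = 1 ∧ adjoint w ∘L w = 1) ∧
    (∀ a : H₁ →L[ℂ] H₁,
      w ∘L ampl3 a ∘L adjoint w = ampl3 (u ∘L ampl2 a ∘L adjoint u)) := by
  -- pointwise versions of the unitarity assumptions
  have hu₂' : ∀ v, adjoint u (u v) = v := fun v => congrFun (congrArg DFunLike.coe hu₂) v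
  have hu₁' : ∀ v, u (adjoint u v) = v := fun v => congrFun (congrArg DFunLike.coe hu₁) v
  have hum₂' : ∀ v, adjoint um (um v) = v := fun v => congrFun (congrArg DFunLike.coe hum₂) v
  have hum₁' : ∀ v, um (adjoint um v) = v := fun v => congrFun (congrArg DFunLike.coe hum₁) v
  -- the source elementary vectors
  set S : Set H₁₃ := {v | ∃ x y z, v = t13 x (um (t23 y z))} with hS_def
  set T : Set H₁₃ := {v | ∃ x y z, v = t13 (u (t12 x y)) z} with hT_def
  -- density of span S
  have hSd : (Submodule.span ℂ S).topologicalClosure = ⊤ := by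
    rw [eq_top_iff]
    refine le_trans ?_ (Submodule.topologicalClosure_mono (le_refl _))
    rw [← h13d]
    refine Submodule.topologicalClosure_minimal _ ?_
      (Submodule.isClosed_topologicalClosure _)
    rw [Submodule.span_le]
    rintro v ⟨x, z, rfl⟩
    have := mem_of_dense_span' h23d ((t13 x).comp um)
      (Submodule.span ℂ S).topologicalClosure
      (Submodule.isClosed_topologicalClosure _)
      (fun v ⟨y, z', hv⟩ => by
        refine Submodule.le_topologicalClosure _ (Submodule.subset_span ?_)
        exact ⟨x, y, z', by simp [hv]⟩) (adjoint um z)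
    simp only [comp_apply, hum₁' z] at this
    exact this
  -- density of span T
  have hTd : (Submodule.span ℂ T).topologicalClosure = ⊤ := by
    rw [eq_top_iff]
    rw [← h13d]
    refine Submodule.topologicalClosure_minimal _ ?_
      (Submodule.isClosed_topologicalClosure _)
    rw [Submodule.span_le]
    rintro v ⟨x, z, rfl⟩
    have := mem_of_dense_span' h12d ((t13.flip z).comp u)
      (Submodule.span ℂ T).topologicalClosure
      (Submodule.isClosed_topologicalClosure _)
      (fun v ⟨x', y', hv⟩ => by
        refine Submodule.le_topologicalClosure _ (Submodule.subset_span ?_)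
        exact ⟨x', y', z, by simp [hv]⟩) (adjoint u x)
    simp only [comp_apply, hu₁' x] at this
    exact this
  -- w preserves inner products of elementary vectors
  have key : ∀ (ξ : H₁₃), ξ ∈ S → ∀ (η : H₁₃), η ∈ S →
      (inner ℂ (w ξ) (w η) : ℂ) = inner ℂ ξ η := by
    rintro _ ⟨x, y, z, rfl⟩ _ ⟨x', y', z', rfl⟩
    rw [h_w, h_w, h13, h13]
    have e1 : (inner ℂ (u (t12 x y)) (u (t12 x' y')) : ℂ) = inner ℂ (t12 x y) (t12 x' y') := by
      rw [← adjoint_inner_right, hu₂' (t12 x' y')]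
    have e2 : (inner ℂ (um (t23 y z)) (um (t23 y' z')) : ℂ) = inner ℂ (t23 y z) (t23 y' z') := by
      rw [← adjoint_inner_right, hum₂' (t23 y' z')]
    rw [e1, e2, h12, h23]
    ring
  -- w* w = 1
  have hwsw : adjoint w ∘L w = 1 := by
    refine ext_of_dense_span' hSd ?_
    intro ξ hξ
    have hz : ∀ η, (inner ℂ ((adjoint w ∘L w) ξ - ξ) η : ℂ) = 0 := by
      have hb : IsClosed ((⊥ : Submodule ℂ ℂ) : Set ℂ) := by
        simp only [Submodule.bot_coe]; exact isClosed_singleton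
      intro η
      have := mem_of_dense_span' hSd (innerSL ℂ ((adjoint w ∘L w) ξ - ξ)) ⊥ hb
        (fun η' hη' => by
          rw [Submodule.mem_bot]
          simp only [innerSL_apply_apply, comp_apply, inner_sub_left]
          rw [adjoint_inner_left, key ξ hξ η' hη', sub_self]) η
      rw [Submodule.mem_bot] at this
      simpa only [innerSL_apply_apply] using this
    have : (adjoint w ∘L w) ξ - ξ = 0 := by
      have := hz ((adjoint w ∘L w) ξ - ξ)
      exact inner_self_eq_zero.mp this
    simpa [sub_eq_zero] using this
  have hwsw' : ∀ v, adjoint w (w v) = v := fun v => congrFun (congrArg DFunLike.coe hwsw) v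
  -- w w* = 1
  have hwws : w ∘L adjoint w = 1 := by
    refine ext_of_dense_span' hTd ?_
    rintro _ ⟨x, y, z, rfl⟩
    have h1 : t13 (u (t12 x y)) z = w (t13 x (um (t23 y z))) := (h_w x y z).symm
    rw [h1]
    simp only [comp_apply, ContinuousLinearMap.one_apply, hwsw' (t13 x (um (t23 y z)))]
  refine ⟨⟨hwws, hwsw⟩, ?_⟩
  -- the intertwining relation
  intro a
  have hint : w ∘L ampl3 a = ampl3 (u ∘L ampl2 a ∘L adjoint u) ∘L w := by
    refine ext_of_dense_span' hSd ?_
    rintro _ ⟨x, y, z, rfl⟩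
    simp only [comp_apply]
    rw [h_ampl3, h_w, h_w, h_ampl3]
    congr 1
    simp only [comp_apply]
    rw [hu₂' (t12 x y), h_ampl2]
  calc w ∘L ampl3 a ∘L adjoint w
      = (w ∘L ampl3 a) ∘L adjoint w := by rw [comp_assoc]
    _ = (ampl3 (u ∘L ampl2 a ∘L adjoint u) ∘L w) ∘L adjoint w := by rw [hint]
    _ = ampl3 (u ∘L ampl2 a ∘L adjoint u) ∘L (w ∘L adjoint w) := by rw [comp_assoc]
    _ = ampl3 (u ∘L ampl2 a ∘L adjoint u) := by rw [hwws]; rfl
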